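/- Let (S,d) be a metric space, φ : S → ℝ a function, τ > 0, and (a_n)_{n≥1} positive reals. Let (u_n)_{n≥0} in S satisfy u_n ∈ argmin_{u∈S} {φ(u) + a_n d(u, u_{n−1})²/(2τ)} for all n ≥ 1. Then for all integers 0 ≤ m < n, d(u_n, u_m)² ≤ 2(φ(u_m) − φ(u_n)) · Σ_{k=m+1}^{n} τ/a_k. -/

import Mathlib

open Finset

/-- Hölder-type equicontinuity estimate for discrete orbits of the perturbed Euler
scheme: for `m < n`, `d(u_n, u_m)² ≤ 2(φ(u_m) - φ(u_n)) Σ_{k=m+1}^n τ/a_k`. -/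
theorem stmt_19 {S : Type*} [MetricSpace S] (φ : S → ℝ) (τ : ℝ) (hτ : 0 < τ)
    (a : ℕ → ℝ) (ha : ∀ n : ℕ, 1 ≤ n → 0 < a n) (u : ℕ → S)
    (hmin : ∀ n : ℕ, 1 ≤ n → ∀ v : S,
      φ (u n) + a n * dist (u n) (u (n - 1)) ^ 2 / (2 * τ) ≤
        φ v + a n * dist v (u (n - 1)) ^ 2 / (2 * τ)) :
    ∀ m n : ℕ, m < n →
      dist (u n) (u m) ^ 2 ≤
        2 * (φ (u m) - φ (u n)) * ∑ k ∈ Finset.Icc (m + 1) n, τ / a k := by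
  intro m n hmn
  -- one-step estimate
  have key : ∀ k : ℕ, 1 ≤ k →
      dist (u k) (u (k - 1)) ^ 2 ≤ τ / a k * (2 * (φ (u (k - 1)) - φ (u k))) := by
    intro k hk
    have h := hmin k hk (u (k - 1))
    simp only [dist_self] at h
    have hak := ha k hk
    have h0 : a k * (0:ℝ) ^ 2 / (2 * τ) = 0 := by ring
    rw [h0] at h
    have hd : a k * dist (u k) (u (k - 1)) ^ 2 / (2 * τ) ≤ φ (u (k - 1)) - φ (u k) := by
      linarith
    have h3 : a k * dist (u k) (u (k - 1)) ^ 2 ≤ (φ (u (k - 1)) - φ (u k)) * (2 * τ) :=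
      (div_le_iff₀ (by positivity)).mp hd
    rw [div_mul_eq_mul_div, le_div_iff₀ hak]
    nlinarith [h3]
  have mono : ∀ k : ℕ, 1 ≤ k → φ (u k) ≤ φ (u (k - 1)) := by
    intro k hk
    have h := hmin k hk (u (k - 1))
    simp only [dist_self] at h
    have hak := ha k hk
    have h0 : a k * (0:ℝ) ^ 2 / (2 * τ) = 0 := by ring
    rw [h0] at h
    have hq : 0 ≤ a k * dist (u k) (u (k - 1)) ^ 2 / (2 * τ) := by positivity
    linarith
  have hMn : m + (n - m) = n := by omega
  -- triangle inequality
  have tri : dist (u n) (u m) ≤ ∑ i ∈ range (n - m), dist (u (m + i)) (u (m + i + 1)) := by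
    have := dist_le_range_sum_dist (fun i => u (m + i)) (n - m)
    simpa [hMn, dist_comm, ← add_assoc] using this
  set r : ℕ → ℝ := fun i => Real.sqrt (τ / a (m + i + 1) * (2 * (φ (u (m + i)) - φ (u (m + i + 1)))))
  have hterm : ∀ i ∈ range (n - m), dist (u (m + i)) (u (m + i + 1)) ≤ r i := by
    intro i _
    have h1 : 1 ≤ m + i + 1 := by omega
    have := key (m + i + 1) h1
    simp only [Nat.add_sub_cancel] at this
    rw [← Real.sqrt_sq dist_nonneg]
    apply Real.sqrt_le_sqrt
    simpa [dist_comm] using this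
  have tri2 : dist (u n) (u m) ≤ ∑ i ∈ range (n - m), r i :=
    tri.trans (Finset.sum_le_sum hterm)
  have hfnonneg : ∀ i ∈ range (n - m), (0:ℝ) ≤ τ / a (m + i + 1) := by
    intro i _
    exact le_of_lt (div_pos hτ (ha _ (by omega)))
  have hgnonneg : ∀ i ∈ range (n - m), (0:ℝ) ≤ 2 * (φ (u (m + i)) - φ (u (m + i + 1))) := by
    intro i _
    have := mono (m + i + 1) (by omega)
    simp only [Nat.add_sub_cancel] at this
    linarith
  have cs : (∑ i ∈ range (n - m), r i) ^ 2 ≤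
      (∑ i ∈ range (n - m), τ / a (m + i + 1)) * ∑ i ∈ range (n - m), 2 * (φ (u (m + i)) - φ (u (m + i + 1))) := by
    apply Finset.sum_sq_le_sum_mul_sum_of_sq_eq_mul _ hfnonneg hgnonneg
    intro i hi
    exact Real.sq_sqrt (mul_nonneg (hfnonneg i hi) (hgnonneg i hi))
  have tele : ∑ i ∈ range (n - m), 2 * (φ (u (m + i)) - φ (u (m + i + 1))) =
      2 * (φ (u m) - φ (u n)) := by
    rw [← Finset.mul_sum]
    congr 1
    have := Finset.sum_range_sub' (fun i => φ (u (m + i))) (n - m)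
    simpa [hMn, ← add_assoc] using this
  have hIcc : ∑ k ∈ Finset.Icc (m + 1) n, τ / a k =
      ∑ i ∈ range (n - m), τ / a (m + i + 1) := by
    rw [← Finset.Ico_add_one_right_eq_Icc, Finset.sum_Ico_eq_sum_range]
    have : n + 1 - (m + 1) = (n - m) := by omega
    rw [this]
    apply Finset.sum_congr rfl
    intro i _
    have : m + 1 + i = m + i + 1 := by omega
    rw [this]
  have hd0 : 0 ≤ dist (u n) (u m) := dist_nonneg
  have hr0 : 0 ≤ ∑ i ∈ range (n - m), r i :=
    Finset.sum_nonneg fun i _ => Real.sqrt_nonneg _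
  calc dist (u n) (u m) ^ 2 ≤ (∑ i ∈ range (n - m), r i) ^ 2 := by
        apply pow_le_pow_left₀ hd0 tri2
    _ ≤ (∑ i ∈ range (n - m), τ / a (m + i + 1)) * (2 * (φ (u m) - φ (u n))) := by
        rw [← tele]; exact cs
    _ = 2 * (φ (u m) - φ (u n)) * ∑ k ∈ Finset.Icc (m + 1) n, τ / a k := by
        rw [hIcc]; ring
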